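/- Model two-dimensional Minkowski spacetime as ℝ² with quadratic form Q(v) = −v₀² + v₁², and let γ(t) = (sinh t, cosh t) be the uniformly accelerated (Rindler) clock. Then for every q ∈ ℝ² not lying on the image of γ: (i) there exists t ∈ ℝ with Q(γ(t) − q) = 0 and (γ(t) − q)₀ > 0 (a future-pointing light ray from q to γ) if and only if q₀ < q₁; and (ii) there exists t ∈ ℝ with Q(γ(t) − q) = 0 and (γ(t) − q)₀ < 0 (a past-pointing light ray from q to γ, i.e., a light ray from γ to q) if and only if q₀ > −q₁. In particular, events with q₀ ≥ q₁ cannot be connected to γ by any future-pointing light ray and events with q₀ ≤ −q₁ cannot be connected to γ by any past-pointing light ray: the lines q₀ = q₁ and q₀ = −q₁ are event horizons for γ. -/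
import Mathlib


/-- The Minkowski quadratic form on two-dimensional Minkowski spacetime `ℝ²`. -/
noncomputable def minkQ2 (v : Fin 2 → ℝ) : ℝ := -(v 0) ^ 2 + (v 1) ^ 2

lemma rindler_key (a b : ℝ) (h : ∀ t : ℝ, Real.sinh t = a → Real.cosh t ≠ b) :
    (∃ t : ℝ, -(Real.sinh t - a) ^ 2 + (Real.cosh t - b) ^ 2 = 0 ∧
      Real.sinh t - a > 0) ↔ a < b := by
  constructor
  · rintro ⟨t, h0, hpos⟩
    have hsq : (Real.cosh t - b) ^ 2 = (Real.sinh t - a) ^ 2 := by linarith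
    have hcs : Real.cosh t - Real.sinh t = Real.exp (-t) := Real.cosh_sub_sinh t
    have hexp : 0 < Real.exp (-t) := Real.exp_pos _
    have hfac : (Real.cosh t - b - (Real.sinh t - a)) *
        (Real.cosh t - b + (Real.sinh t - a)) = 0 := by nlinarith
    rcases mul_eq_zero.mp hfac with h1 | h1
    · -- cosh t - b = sinh t - a, so b - a = cosh t - sinh t = e^{-t} > 0
      nlinarith
    · -- cosh t - b = -(sinh t - a): a < sinh t < cosh t < b
      have : Real.sinh t < Real.cosh t := by nlinarith
      nlinarith
  · intro hab
    have hu : (0:ℝ) < b - a := by linarith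
    rcases lt_trichotomy (b ^ 2 - a ^ 2) 1 with hc | hc | hc
    · -- use e^t = (b-a)⁻¹
      refine ⟨-Real.log (b - a), ?_, ?_⟩ <;>
      · have he1 : Real.exp (-Real.log (b - a)) = (b - a)⁻¹ := by
          rw [Real.exp_neg, Real.exp_log hu]
        have he2 : Real.exp (-(-Real.log (b - a))) = b - a := by
          rw [neg_neg, Real.exp_log hu]
        have hinv : (b - a) * (b - a)⁻¹ = 1 := mul_inv_cancel₀ (ne_of_gt hu)
        simp only [Real.sinh_eq, Real.cosh_eq, he1, he2]
        have hipos : (0:ℝ) < (b - a)⁻¹ := inv_pos.mpr hu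
        nlinarith
    · -- on the worldline: contradiction
      exfalso
      have hb : 0 < b := by nlinarith
      apply h (Real.arsinh a) (Real.sinh_arsinh a)
      rw [Real.cosh_arsinh]
      rw [show 1 + a ^ 2 = b ^ 2 by nlinarith]
      exact Real.sqrt_sq hb.le
    · -- use e^t = a + b
      have hab2 : 0 < a + b := by nlinarith
      refine ⟨Real.log (a + b), ?_, ?_⟩ <;>
      · have he1 : Real.exp (Real.log (a + b)) = a + b := Real.exp_log hab2
        have he2 : Real.exp (-Real.log (a + b)) = (a + b)⁻¹ := by
          rw [Real.exp_neg, Real.exp_log hab2]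
        have hinv : (a + b) * (a + b)⁻¹ = 1 := mul_inv_cancel₀ (ne_of_gt hab2)
        simp only [Real.sinh_eq, Real.cosh_eq, he1, he2]
        have hipos : (0:ℝ) < (a + b)⁻¹ := inv_pos.mpr hab2
        nlinarith

/-- Horizons of the uniformly accelerated (Rindler) clock
`γ(t) = (sinh t, cosh t)` in two-dimensional Minkowski spacetime (Figure 2, right,
of the paper): an event `q` off the worldline can be connected to `γ` by a
future-pointing light ray iff `q₀ < q₁`, and by a past-pointing light ray (a light
ray from `γ` to `q`) iff `q₀ > -q₁`; the null lines `q₀ = ±q₁` are event horizons. -/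
theorem rindler_horizons
    (γ : ℝ → Fin 2 → ℝ)
    (hγ : ∀ t : ℝ, γ t = ![Real.sinh t, Real.cosh t])
    (q : Fin 2 → ℝ) (hq : q ∉ Set.range γ) :
    ((∃ t : ℝ, minkQ2 (γ t - q) = 0 ∧ (γ t - q) 0 > 0) ↔ q 0 < q 1) ∧
    ((∃ t : ℝ, minkQ2 (γ t - q) = 0 ∧ (γ t - q) 0 < 0) ↔ q 0 > -(q 1)) := by
  have hne : ∀ t : ℝ, Real.sinh t = q 0 → Real.cosh t ≠ q 1 := by
    intro t hs hc
    exact hq ⟨t, by rw [hγ]; funext i; fin_cases i <;> simp [hs, hc]⟩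
  have hsimp : ∀ t : ℝ, minkQ2 (γ t - q) =
      -(Real.sinh t - q 0) ^ 2 + (Real.cosh t - q 1) ^ 2 := by
    intro t; simp [minkQ2, hγ]
  have hsimp0 : ∀ t : ℝ, (γ t - q) 0 = Real.sinh t - q 0 := by
    intro t; simp [hγ]
  constructor
  · rw [← rindler_key (q 0) (q 1) hne]
    constructor
    · rintro ⟨t, h0, h1⟩
      exact ⟨t, by rw [← hsimp]; exact h0, by rw [← hsimp0]; exact h1⟩
    · rintro ⟨t, h0, h1⟩
      exact ⟨t, by rw [hsimp]; exact h0, by rw [hsimp0]; exact h1⟩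
  · have hne' : ∀ t : ℝ, Real.sinh t = -(q 0) → Real.cosh t ≠ q 1 := by
      intro t hs
      have : Real.sinh (-t) = q 0 := by rw [Real.sinh_neg, hs, neg_neg]
      have := hne (-t) this
      rwa [Real.cosh_neg] at this
    rw [show (q 0 > -(q 1)) ↔ (-(q 0) < q 1) by constructor <;> intro <;> linarith,
      ← rindler_key (-(q 0)) (q 1) hne']
    constructor
    · rintro ⟨t, h0, h1⟩
      refine ⟨-t, ?_, ?_⟩
      · rw [Real.sinh_neg, Real.cosh_neg]
        rw [hsimp] at h0
        nlinarith [h0]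
      · rw [Real.sinh_neg]
        rw [hsimp0] at h1
        linarith
    · rintro ⟨t, h0, h1⟩
      refine ⟨-t, ?_, ?_⟩
      · rw [hsimp, Real.sinh_neg, Real.cosh_neg]
        nlinarith [h0]
      · rw [hsimp0, Real.sinh_neg]
        linarith
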